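/- Let p ≥ 1 and let Σ be a p×p real symmetric positive-definite matrix with condition number c(Σ) = μ_max(Σ)/μ_min(Σ). Then for all indices 1 ≤ i < j ≤ p, the off-diagonal entry satisfies Σ_{i,j} ≥ -((c(Σ)-1)/(c(Σ)+1)) · (Σ_{i,i} + Σ_{j,j})/2. -/

import Mathlib

open Matrix

private lemma quad_eq' {n : Type*} [Fintype n] [DecidableEq n] {A : Matrix n n ℝ}
    (hA : A.IsHermitian) (x : n → ℝ) :
    x ⬝ᵥ (A *ᵥ x) =
      ∑ k, hA.eigenvalues k * ((star (hA.eigenvectorUnitary : Matrix n n ℝ) *ᵥ x) k)^2 := by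
  set U : Matrix n n ℝ := (hA.eigenvectorUnitary : Matrix n n ℝ) with hU
  set y := star U *ᵥ x with hy
  conv_lhs => rw [hA.spectral_theorem, Unitary.conjStarAlgAut_apply]
  rw [← Matrix.mulVec_mulVec, ← Matrix.mulVec_mulVec, Matrix.dotProduct_mulVec,
    ← Matrix.mulVec_transpose]
  have htr : Uᵀ = star U := by
    rw [Matrix.star_eq_conjTranspose, Matrix.conjTranspose_eq_transpose_of_trivial]
  rw [htr, ← hy]
  simp [dotProduct, Matrix.mulVec_diagonal]
  exact Finset.sum_congr rfl fun k _ => by ring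

private lemma norm_eq' {n : Type*} [Fintype n] [DecidableEq n] {A : Matrix n n ℝ}
    (hA : A.IsHermitian) (x : n → ℝ) :
    x ⬝ᵥ x = ∑ k, ((star (hA.eigenvectorUnitary : Matrix n n ℝ) *ᵥ x) k)^2 := by
  set U : Matrix n n ℝ := (hA.eigenvectorUnitary : Matrix n n ℝ) with hU
  set y := star U *ᵥ x with hy
  have h1 : U * star U = 1 := (Matrix.mem_unitaryGroup_iff).mp hA.eigenvectorUnitary.2
  have htr : Uᵀ = star U := by
    rw [Matrix.star_eq_conjTranspose, Matrix.conjTranspose_eq_transpose_of_trivial]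
  calc x ⬝ᵥ x = x ⬝ᵥ ((U * star U) *ᵥ x) := by rw [h1, Matrix.one_mulVec]
    _ = y ⬝ᵥ y := by
        rw [← Matrix.mulVec_mulVec, Matrix.dotProduct_mulVec, ← Matrix.mulVec_transpose, htr, ← hy]
    _ = ∑ k, (y k)^2 := by simp [dotProduct, sq]

private lemma rayleigh_bounds' {n : Type*} [Fintype n] [DecidableEq n] [Nonempty n]
    {A : Matrix n n ℝ} (hA : A.IsHermitian) (x : n → ℝ) :
    (⨅ k, hA.eigenvalues k) * (x ⬝ᵥ x) ≤ x ⬝ᵥ (A *ᵥ x) ∧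
      x ⬝ᵥ (A *ᵥ x) ≤ (⨆ k, hA.eigenvalues k) * (x ⬝ᵥ x) := by
  set y := star (hA.eigenvectorUnitary : Matrix n n ℝ) *ᵥ x with hy
  have hbb : BddBelow (Set.range hA.eigenvalues) := (Set.finite_range _).bddBelow
  have hba : BddAbove (Set.range hA.eigenvalues) := (Set.finite_range _).bddAbove
  rw [quad_eq' hA x, norm_eq' hA x, ← hy, Finset.mul_sum, Finset.mul_sum]
  constructor
  · exact Finset.sum_le_sum fun k _ =>
      mul_le_mul_of_nonneg_right (ciInf_le hbb k) (sq_nonneg _)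
  · exact Finset.sum_le_sum fun k _ =>
      mul_le_mul_of_nonneg_right (le_ciSup hba k) (sq_nonneg _)

/-- For a symmetric positive-definite `p × p` real matrix `S` with condition
number `c = μ_max / μ_min`, every off-diagonal entry satisfies
`S i j ≥ -((c-1)/(c+1)) * (S i i + S j j)/2`. -/
theorem offdiag_lower_bound_condition_number
    (p : ℕ) (hp : 1 ≤ p)
    (S : Matrix (Fin p) (Fin p) ℝ) (hS : S.PosDef) :
    ∀ i j : Fin p, i < j →
      S i j ≥
        -(((⨆ k, hS.isHermitian.eigenvalues k) / (⨅ k, hS.isHermitian.eigenvalues k) - 1) /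
            ((⨆ k, hS.isHermitian.eigenvalues k) / (⨅ k, hS.isHermitian.eigenvalues k) + 1)) *
          ((S i i + S j j) / 2) := by
  intro i j hij
  have hne : i ≠ j := Fin.ne_of_lt hij
  have hnp : Nonempty (Fin p) := ⟨⟨0, hp⟩⟩
  set f := hS.isHermitian.eigenvalues with hf
  set m := ⨅ k, f k with hm
  set M := ⨆ k, f k with hM
  -- positivity of m and m ≤ M
  obtain ⟨k0, hk0⟩ := Finite.exists_min f
  have hm_pos : 0 < m := lt_of_lt_of_le (hS.eigenvalues_pos k0) (le_ciInf hk0)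
  have hmM : m ≤ M :=
    le_trans (ciInf_le ((Set.finite_range f).bddBelow) k0)
      (le_ciSup ((Set.finite_range f).bddAbove) k0)
  have hM_pos : 0 < M := lt_of_lt_of_le hm_pos hmM
  -- symmetry
  have hsym : S j i = S i j := by
    have h := hS.isHermitian
    rw [Matrix.IsHermitian] at h
    conv_lhs => rw [← h]
    simp [Matrix.conjTranspose_apply]
  -- the two quadratic-form evaluations
  have hquad : ∀ c : ℝ,
      (Pi.single i (1:ℝ) + Pi.single j c) ⬝ᵥ (S *ᵥ (Pi.single i (1:ℝ) + Pi.single j c))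
        = S i i + 2*c*(S i j) + c^2 * S j j := by
    intro c
    simp [Matrix.mulVec_add, add_dotProduct, single_dotProduct,
      Matrix.mulVec_single, hne, hne.symm, hsym, Pi.single_apply]
    ring
  have hnorm : ∀ c : ℝ,
      (Pi.single i (1:ℝ) + Pi.single j c) ⬝ᵥ (Pi.single i (1:ℝ) + Pi.single j c) = 1 + c^2 := by
    intro c
    simp [add_dotProduct, single_dotProduct, Pi.single_apply, hne, hne.symm]
    ring
  have hlow := (rayleigh_bounds' hS.isHermitian (Pi.single i (1:ℝ) + Pi.single j 1)).1
  have hup := (rayleigh_bounds' hS.isHermitian (Pi.single i (1:ℝ) + Pi.single j (-1))).2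
  rw [hquad 1, hnorm 1] at hlow
  rw [hquad (-1), hnorm (-1)] at hup
  norm_num at hlow hup
  -- arithmetic
  set a := S i i + S j j with ha
  set t := S i j with ht
  have hMm : 0 < M + m := by linarith
  have hratio : (M/m - 1)/(M/m + 1) = (M - m)/(M + m) := by
    field_simp
  have key : -((M - m) * a) ≤ 2*(M+m)*t := by
    nlinarith [mul_le_mul_of_nonneg_left hlow hM_pos.le,
      mul_le_mul_of_nonneg_left hup hm_pos.le]
  rw [ge_iff_le, hratio]
  have heq : -((M - m) / (M + m)) * (a / 2) = (-((M - m) * a)) / (2*(M+m)) := by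
    field_simp
  rw [heq, div_le_iff₀ (by positivity)]
  linarith
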